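/- Let G be the Paley graph of prime order p ≡ 1 (mod 4). Then the clique number satisfies ω(G) < √p. -/

import Mathlib

/-- The Paley graph of prime order p ≡ 1 (mod 4) has clique number less than √p. -/
theorem stmt_15 (p : ℕ) [Fact p.Prime] (hp : p % 4 = 1)
    (G : SimpleGraph (ZMod p))
    (hadj : ∀ a b : ZMod p, G.Adj a b ↔ a ≠ b ∧ IsSquare (b - a)) :
    ∀ t : Finset (ZMod p), G.IsClique ↑t → (t.card : ℝ) < Real.sqrt p := by
  intro t ht
  have hprime : p.Prime := Fact.out
  have hp2 : p ≠ 2 := by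
    intro h; rw [h] at hp; norm_num at hp
  have hchar : ringChar (ZMod p) ≠ 2 := by
    rw [ZMod.ringChar_zmod_n]; exact hp2
  obtain ⟨s, hs⟩ := FiniteField.exists_nonsquare (F := ZMod p) hchar
  have hs0 : s ≠ 0 := fun h => hs (by rw [h]; exact IsSquare.zero)
  -- squares of differences within the clique
  have hsq : ∀ a ∈ t, ∀ b ∈ t, IsSquare (b - a) := by
    intro a ha b hb
    by_cases hab : a = b
    · rw [hab, sub_self]; exact IsSquare.zero
    · exact ((hadj a b).mp (ht ha hb hab)).2
  -- injectivity of (a,b) ↦ a + s*b on t × t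
  have hinj : Set.InjOn (fun x : ZMod p × ZMod p => x.1 + s * x.2)
      ↑(t ×ˢ t) := by
    rintro ⟨a, b⟩ hab ⟨a', b'⟩ hab' heq
    simp only [Finset.coe_product, Set.mem_prod, Finset.mem_coe] at hab hab'
    simp only at heq
    have hkey : a - a' = s * (b' - b) := by ring_nf; linear_combination heq
    by_cases hbb : b = b'
    · subst hbb
      simp only [sub_self, mul_zero] at hkey
      have : a = a' := by linear_combination hkey
      simp [this]
    · exfalso
      have hbb0 : b' - b ≠ 0 := sub_ne_zero.mpr (Ne.symm hbb)
      by_cases haa : a = a'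
      · subst haa
        simp only [sub_self] at hkey
        exact hbb0 (by
          have := hkey.symm
          rcases mul_eq_zero.mp this with h | h
          · exact absurd h hs0
          · exact h)
      · have h1 : IsSquare (a - a') := hsq a' hab'.1 a hab.1
        have h2 : IsSquare (b' - b) := hsq b hab.2 b' hab'.2
        have hss : s = (a - a') * (b' - b)⁻¹ := by
          field_simp [hkey]; exact hkey.symm
        exact hs (hss ▸ h1.mul ((isSquare_inv).mpr h2))
  have hcard : t.card * t.card ≤ p := by
    have := Finset.card_le_card_of_injOn (fun x : ZMod p × ZMod p => x.1 + s * x.2)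
      (fun _ _ => Finset.mem_univ _) hinj
    simpa [Finset.card_product, ZMod.card] using this
  have hne : t.card * t.card ≠ p := by
    intro h
    have hdvd : t.card ∣ p := ⟨t.card, h.symm⟩
    rcases (hprime.eq_one_or_self_of_dvd _ hdvd) with h1 | h1
    · rw [h1] at h; simp at h; exact hprime.ne_one h.symm
    · rw [h1] at h
      nlinarith [hprime.two_le]
  have hlt : t.card * t.card < p := lt_of_le_of_ne hcard hne
  have : (t.card : ℝ) ^ 2 < p := by
    rw [sq]; exact_mod_cast hlt
  have h0 : (0 : ℝ) ≤ t.card := by positivity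
  nlinarith [Real.sq_sqrt (by positivity : (0:ℝ) ≤ (p:ℝ)),
    Real.sqrt_nonneg (p : ℝ)]
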